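/- Let n = 2m + 1 be an odd positive integer. Define the (n+1)×(n+1) real matrix A by A_{ij} = (−1)^{j+m} · (cos(jπ/n))^i for 0 ≤ i, j ≤ n, and define y ∈ ℝ^{n+1} by y_0 = 1/(2n), y_j = (1/n)·sec²(jπ/n) for 1 ≤ j ≤ n−1, and y_n = 1/(2n). Then y is the unique solution of A·y = e_1, where e_1 = (0,1,0,…,0)^T is the vector with 1 in coordinate i = 1 and 0 elsewhere. -/

import Mathlib

open Real Finset Matrix
noncomputable def wt (n j : ℕ) : ℝ := if j = 0 ∨ j = n then 1/2 else 1

lemma cos_nat_pi (j : ℕ) : Real.cos (j * π) = (-1)^j := by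
  induction j with
  | zero => simp
  | succ k ih =>
    push_cast
    rw [add_mul, one_mul, Real.cos_add_pi, ih]
    ring

lemma sumU (n r : ℕ) (hn : 0 < n) (hr1 : 1 ≤ r) (hr2 : r ≤ 2*n - 1) :
    ∑ j ∈ range (n+1), Real.cos (r*j*π/n) = (Real.cos (r*π) + 1)/2 := by
  set h : ℝ := r*π/(2*n) with hh
  have hπ := Real.pi_pos
  have hn' : (0:ℝ) < n := by exact_mod_cast hn
  have hr' : (0:ℝ) < r := by exact_mod_cast hr1
  have hr2' : (r:ℝ) < 2*n := by exact_mod_cast (by omega : r < 2*n)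
  have hpos : 0 < h := by positivity
  have hlt : h < π := by
    rw [hh, div_lt_iff₀ (by positivity)]
    nlinarith
  have hs : 0 < Real.sin h := Real.sin_pos_of_pos_of_lt_pi hpos hlt
  have key : ∀ j : ℕ, 2 * Real.sin h * Real.cos (r*j*π/n) =
      Real.sin ((2*(j+1:ℕ) - 1 : ℝ)*h) - Real.sin ((2*(j:ℕ) - 1 : ℝ)*h) := by
    intro j
    rw [Real.sin_sub_sin]
    have e1 : ((2*(j+1:ℕ) - 1 : ℝ)*h - (2*(j:ℕ) - 1 : ℝ)*h)/2 = h := by push_cast; ring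
    have e2 : ((2*(j+1:ℕ) - 1 : ℝ)*h + (2*(j:ℕ) - 1 : ℝ)*h)/2 = r*j*π/n := by
      push_cast; field_simp [hh]; have hh2 : h*(2*n) = r*π := (by rw [hh]; exact div_mul_cancel₀ _ (by positivity)); linear_combination (2*(j:ℝ)) * hh2
    rw [e1, e2]
  have tel : ∑ j ∈ range (n+1),
      (Real.sin ((2*(j+1:ℕ) - 1 : ℝ)*h) - Real.sin ((2*(j:ℕ) - 1 : ℝ)*h))
      = Real.sin ((2*(n+1:ℕ) - 1 : ℝ)*h) - Real.sin ((2*(0:ℕ) - 1 : ℝ)*h) :=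
    Finset.sum_range_sub (fun j => Real.sin ((2*(j:ℕ) - 1 : ℝ)*h)) (n+1)
  have tot : 2 * Real.sin h * ∑ j ∈ range (n+1), Real.cos (r*j*π/n)
      = Real.sin ((2*(n+1:ℕ) - 1 : ℝ)*h) - Real.sin ((2*(0:ℕ) - 1 : ℝ)*h) := by
    rw [Finset.mul_sum]
    rw [← tel]
    exact Finset.sum_congr rfl (fun j _ => key j)
  have e3 : ((2*(n+1:ℕ) - 1 : ℝ)*h) = r*π + h := by
    push_cast; field_simp [hh]; have hh2 : h*(2*n) = r*π := (by rw [hh]; exact div_mul_cancel₀ _ (by positivity)); linear_combination hh2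
  have e4 : ((2*(0:ℕ) - 1 : ℝ)*h) = -h := by push_cast; ring
  rw [e3, e4, Real.sin_neg, Real.sin_add, Real.sin_nat_mul_pi] at tot
  have tot2 : 2 * Real.sin h * ∑ j ∈ range (n+1), Real.cos (r*j*π/n)
      = 2 * Real.sin h * ((Real.cos (r*π) + 1)/2) := by rw [tot]; ring
  exact mul_left_cancel₀ (by positivity) tot2
lemma sumW (n r : ℕ) (hn : 0 < n) (hr1 : 1 ≤ r) (hr2 : r ≤ 2*n - 1) :
    ∑ j ∈ range (n+1), wt n j * Real.cos (r*j*π/n) = 0 := by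
  have hn' : (0:ℝ) < n := by exact_mod_cast hn
  have split : ∀ j ∈ range (n+1), wt n j * Real.cos (r*j*π/n) =
      Real.cos (r*j*π/n)
      - (if j = 0 then (1/2) * Real.cos (r*j*π/n) else 0)
      - (if j = n then (1/2) * Real.cos (r*j*π/n) else 0) := by
    intro j hj
    unfold wt
    by_cases h0 : j = 0
    · have : j ≠ n := by omega
      simp [h0, this, (show (0:ℕ) ≠ n by omega)]; ring
    · by_cases h1 : j = n
      · simp [h0, h1, (show n ≠ 0 by omega)]; ring
      · simp [h0, h1]
  rw [Finset.sum_congr rfl split]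
  rw [Finset.sum_sub_distrib, Finset.sum_sub_distrib, Finset.sum_ite_eq' (range (n+1)) 0,
    Finset.sum_ite_eq' (range (n+1)) n, sumU n r hn hr1 hr2]
  have m0 : (0:ℕ) ∈ range (n+1) := by simp
  have mn : n ∈ range (n+1) := by simp
  simp only [m0, mn, if_pos]
  have e0 : (r:ℝ)*(0:ℕ)*π/n = 0 := by push_cast; ring
  have en : (r:ℝ)*(n:ℕ)*π/n = r*π := by field_simp
  rw [e0, en, Real.cos_zero]
  ring
lemma sumPsi (n : ℕ) (hn : 0 < n) : ∀ q k : ℕ, q + k ≤ n - 1 →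
    ∑ j ∈ range (n+1), wt n j *
      (Real.cos (n*(j*π/n)) * Real.cos (k*(j*π/n)) * Real.cos (j*π/n)^q) = 0 := by
  intro q
  induction q with
  | zero =>
    intro k hk
    have hk' : k ≤ n - 1 := by omega
    have key : ∀ j : ℕ, wt n j *
        (Real.cos (n*(j*π/n)) * Real.cos (k*(j*π/n)) * Real.cos (j*π/n)^0) =
        (wt n j * Real.cos (((n+k:ℕ):ℝ)*j*π/n) + wt n j * Real.cos (((n-k:ℕ):ℝ)*j*π/n))/2 := by
      intro j
      have eA : ((((n+k:ℕ):ℝ)*j*π/n) + (((n-k:ℕ):ℝ)*j*π/n))/2 = n*(j*π/n) := by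
        push_cast [Nat.cast_sub (show k ≤ n by omega)]; ring
      have eB : ((((n+k:ℕ):ℝ)*j*π/n) - (((n-k:ℕ):ℝ)*j*π/n))/2 = k*(j*π/n) := by
        push_cast [Nat.cast_sub (show k ≤ n by omega)]; ring
      have hcc : Real.cos (((n+k:ℕ):ℝ)*j*π/n) + Real.cos (((n-k:ℕ):ℝ)*j*π/n)
          = 2 * Real.cos (n*(j*π/n)) * Real.cos (k*(j*π/n)) := by
        rw [Real.cos_add_cos, eA, eB]
      rw [pow_zero, mul_one]
      linear_combination (-(wt n j)/2) * hcc
    rw [Finset.sum_congr rfl (fun j _ => key j), ← Finset.sum_div, Finset.sum_add_distrib,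
      sumW n (n+k) hn (by omega) (by omega), sumW n (n-k) hn (by omega) (by omega)]
    simp
  | succ q ih =>
    intro k hk
    match k with
    | 0 =>
      have key : ∀ j : ℕ, wt n j *
          (Real.cos (n*(j*π/n)) * Real.cos ((0:ℕ)*(j*π/n)) * Real.cos (j*π/n)^(q+1)) =
          wt n j * (Real.cos (n*(j*π/n)) * Real.cos ((1:ℕ)*(j*π/n)) * Real.cos (j*π/n)^q) := by
        intro j
        push_cast
        rw [zero_mul, Real.cos_zero, one_mul, pow_succ]
        ring
      rw [Finset.sum_congr rfl (fun j _ => key j)]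
      exact ih 1 (by omega)
    | k+1 =>
      have key : ∀ j : ℕ, wt n j *
          (Real.cos (n*(j*π/n)) * Real.cos ((k+1:ℕ)*(j*π/n)) * Real.cos (j*π/n)^(q+1)) =
          (wt n j * (Real.cos (n*(j*π/n)) * Real.cos ((k+2:ℕ)*(j*π/n)) * Real.cos (j*π/n)^q)
          + wt n j * (Real.cos (n*(j*π/n)) * Real.cos ((k:ℕ)*(j*π/n)) * Real.cos (j*π/n)^q))/2 := by
        intro j
        have eA : ((((k+2:ℕ):ℝ)*(j*π/n)) + (((k:ℕ):ℝ)*(j*π/n)))/2 = (k+1:ℕ)*(j*π/n) := by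
          push_cast; ring
        have eB : ((((k+2:ℕ):ℝ)*(j*π/n)) - (((k:ℕ):ℝ)*(j*π/n)))/2 = j*π/n := by
          push_cast; ring
        have : Real.cos (((k+2:ℕ):ℝ)*(j*π/n)) + Real.cos (((k:ℕ):ℝ)*(j*π/n)) =
            2 * Real.cos (((k+1:ℕ):ℝ)*(j*π/n)) * Real.cos (j*π/n) := by
          rw [Real.cos_add_cos, eA, eB]
        rw [pow_succ]
        linear_combination (-(wt n j * Real.cos ((n:ℝ)*(j*π/n)) * Real.cos ((j:ℝ)*π/n)^q)/2) * this
      rw [Finset.sum_congr rfl (fun j _ => key j), ← Finset.sum_div, Finset.sum_add_distrib,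
        ih (k+2) (by omega), ih k (by omega)]
      simp
lemma secId (m : ℕ) (θ : ℝ) : Real.cos ((2*m+1:ℕ)*θ) =
    Real.cos θ * ((-1)^m * (2 * ∑ k ∈ range (m+1), (-1:ℝ)^k * Real.cos (2*k*θ) - 1)) := by
  induction m with
  | zero => simp; ring
  | succ m ih =>
    have h1 : ((-1:ℝ))^m * (-1)^m = 1 := by
      rw [← pow_add, ← two_mul, pow_mul]; norm_num
    have tri : Real.cos ((2*(m+1)+1:ℕ)*θ) + Real.cos ((2*m+1:ℕ)*θ)
        = 2 * Real.cos (2*(m+1:ℕ)*θ) * Real.cos θ := by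
      rw [Real.cos_add_cos]
      push_cast
      ring_nf
    rw [Finset.sum_range_succ]
    push_cast at tri ih ⊢
    rw [show ((2:ℝ)*(m+1)+1)*θ = 2*(m+1)*θ + θ by ring] at tri ⊢
    linear_combination tri - ih - 2*Real.cos (2*((m:ℝ)+1)*θ)*Real.cos θ*h1

lemma cosNeZero (m n j : ℕ) (hn : n = 2*m+1) : Real.cos (j*π/n) ≠ 0 := by
  intro h
  rw [Real.cos_eq_zero_iff] at h
  obtain ⟨k, hk⟩ := h
  have hπ := Real.pi_ne_zero
  have hn' : (n:ℝ) ≠ 0 := Nat.cast_ne_zero.mpr (by omega)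
  have h2 : (2*j:ℝ) = (n:ℝ)*(2*k+1) := by
    field_simp at hk
    apply mul_right_cancel₀ hπ
    linear_combination π * hk
  have h3 : (2*j:ℤ) = (n:ℤ)*(2*k+1) := by exact_mod_cast h2
  have he : Even (2*(j:ℤ)) := even_two_mul _
  rw [h3] at he
  have ho : Odd ((n:ℤ)*(2*k+1)) := by
    refine Odd.mul ⟨m, by push_cast [hn]; ring⟩ ⟨k, by ring⟩
  exact (Int.not_odd_iff_even.mpr he) ho

lemma cosNPi (n j : ℕ) (hn : 0 < n) : Real.cos ((n:ℝ)*(j*π/n)) = (-1)^j := by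
  have hn' : (n:ℝ) ≠ 0 := by exact_mod_cast hn.ne'
  rw [show (n:ℝ)*(j*π/n) = j*π by field_simp]
  induction j with
  | zero => simp
  | succ k ih => push_cast; rw [add_mul, one_mul, Real.cos_add_pi, ih]; ring

lemma sumWt (n : ℕ) (hn : 0 < n) : ∑ j ∈ range (n+1), wt n j = n := by
  have split : ∀ j ∈ range (n+1), wt n j =
      1 - (if j = 0 then (1/2:ℝ) else 0) - (if j = n then (1/2:ℝ) else 0) := by
    intro j hj
    unfold wt
    by_cases h0 : j = 0
    · simp [h0, (show (0:ℕ) ≠ n by omega)]; norm_num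
    · by_cases h1 : j = n
      · simp [h0, h1, (show n ≠ 0 by omega)]; norm_num
      · simp [h0, h1]
  rw [Finset.sum_congr rfl split, Finset.sum_sub_distrib, Finset.sum_sub_distrib,
    Finset.sum_ite_eq' (range (n+1)) 0, Finset.sum_ite_eq' (range (n+1)) n]
  simp
  push_cast
  ring
lemma row0 (m n : ℕ) (hn : n = 2*m+1) :
    ∑ j ∈ range (n+1), ((-1:ℝ))^(j+m) * Real.cos (j*π/n)^(0:ℕ) *
      (if j = 0 ∨ j = n then 1/(2*(n:ℝ)) else (1/(n:ℝ)) * (Real.cos (j*π/n)^2)⁻¹) = 0 := by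
  set G : ℕ → ℝ := fun j => ((-1:ℝ))^(j+m) * Real.cos (j*π/n)^(0:ℕ) *
      (if j = 0 ∨ j = n then 1/(2*(n:ℝ)) else (1/(n:ℝ)) * (Real.cos (j*π/n)^2)⁻¹) with hG
  have hrefl : ∑ j ∈ range (n+1), G (n - j) = ∑ j ∈ range (n+1), G j := by
    have := Finset.sum_range_reflect G (n+1)
    simpa using this
  have hneg : ∀ j ∈ range (n+1), G (n - j) = - G j := by
    intro j hj
    have hjn : j ≤ n := by simp at hj; omega
    have hsign : ((-1:ℝ))^((n-j)+m) = -((-1:ℝ))^(j+m) := by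
      have h1 : ((-1:ℝ))^((n-j)+m) * ((-1:ℝ))^(j+m) = -1 := by
        rw [← pow_add, show (n-j)+m+(j+m) = 4*m+1 by omega]
        exact Odd.neg_one_pow ⟨2*m, by ring⟩
      have h2 : ((-1:ℝ))^(j+m) * ((-1:ℝ))^(j+m) = 1 := by
        rw [← pow_add, ← two_mul, pow_mul]; norm_num
      calc ((-1:ℝ))^((n-j)+m) = ((-1:ℝ))^((n-j)+m) * (((-1:ℝ))^(j+m) * ((-1:ℝ))^(j+m)) := by
            rw [h2, mul_one]
        _ = -((-1:ℝ))^(j+m) := by rw [← mul_assoc, h1]; ring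
    have hcos : Real.cos (((n-j:ℕ):ℝ)*π/n) = -Real.cos ((j:ℝ)*π/n) := by
      have hn' : (n:ℝ) ≠ 0 := Nat.cast_ne_zero.mpr (by omega)
      rw [show ((n-j:ℕ):ℝ)*π/n = π - (j:ℝ)*π/n by
        push_cast [Nat.cast_sub hjn]; field_simp]
      exact Real.cos_pi_sub _
    have hcond : ((n-j = 0 ∨ n-j = n)) ↔ (j = 0 ∨ j = n) := by omega
    rw [hG]
    simp only [pow_zero, mul_one]
    by_cases hc : j = 0 ∨ j = n
    · rw [if_pos (hcond.mpr hc), if_pos hc, hsign]; ring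
    · rw [if_neg (fun h => hc (hcond.mp h)), if_neg hc, hsign, hcos]; ring
  have : ∑ j ∈ range (n+1), G j = - ∑ j ∈ range (n+1), G j := by
    calc ∑ j ∈ range (n+1), G j = ∑ j ∈ range (n+1), G (n-j) := hrefl.symm
      _ = ∑ j ∈ range (n+1), -G j := Finset.sum_congr rfl hneg
      _ = - ∑ j ∈ range (n+1), G j := by rw [Finset.sum_neg_distrib]
  linarith
lemma row2 (m n q : ℕ) (hn : n = 2*m+1) (hq : q + 2 ≤ n) :
    ∑ j ∈ range (n+1), ((-1:ℝ))^(j+m) * Real.cos (j*π/n)^(q+2) *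
      (if j = 0 ∨ j = n then 1/(2*(n:ℝ)) else (1/(n:ℝ)) * (Real.cos (j*π/n)^2)⁻¹) = 0 := by
  have hn0 : 0 < n := by omega
  have hn' : (n:ℝ) ≠ 0 := Nat.cast_ne_zero.mpr (by omega)
  have key : ∀ j ∈ range (n+1), ((-1:ℝ))^(j+m) * Real.cos (j*π/n)^(q+2) *
      (if j = 0 ∨ j = n then 1/(2*(n:ℝ)) else (1/(n:ℝ)) * (Real.cos (j*π/n)^2)⁻¹)
      = ((-1:ℝ))^m/n * (wt n j *
        (Real.cos (n*(j*π/n)) * Real.cos ((0:ℕ)*(j*π/n)) * Real.cos (j*π/n)^q)) := by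
    intro j hj
    have hc := cosNeZero m n j hn
    have hcn := cosNPi n j hn0
    rw [hcn]
    unfold wt
    have hz : Real.cos ((0:ℕ)*((j:ℝ)*π/n)) = 1 := by norm_num
    rw [hz]
    have hps : ((-1:ℝ))^(j+m) = (-1)^j * (-1)^m := by rw [pow_add]
    by_cases hcase : j = 0 ∨ j = n
    · rw [if_pos hcase, if_pos hcase]
      rcases hcase with h0 | h0
      · subst h0; norm_num; ring
      · simp only [h0]
        have : Real.cos ((n:ℝ)*π/n) = -1 := by
          rw [show (n:ℝ)*π/n = π by field_simp]; exact Real.cos_pi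
        rw [this, pow_add, show ((-1:ℝ))^(q+2) = (-1)^q by rw [pow_add]; norm_num]
        ring
    · rw [if_neg hcase, if_neg hcase, hps]
      field_simp
      rw [show q+2 = q+2 by rfl, pow_add]
      ring
  rw [Finset.sum_congr rfl key, ← Finset.mul_sum, sumPsi n hn0 q 0 (by omega), mul_zero]
lemma row1 (m n : ℕ) (hn : n = 2*m+1) :
    ∑ j ∈ range (n+1), ((-1:ℝ))^(j+m) * Real.cos (j*π/n)^(1:ℕ) *
      (if j = 0 ∨ j = n then 1/(2*(n:ℝ)) else (1/(n:ℝ)) * (Real.cos (j*π/n)^2)⁻¹) = 1 := by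
  have hn0 : 0 < n := by omega
  have hn' : (n:ℝ) ≠ 0 := Nat.cast_ne_zero.mpr (by omega)
  -- the key pointwise identity
  have key : ∀ j ∈ range (n+1), ((-1:ℝ))^(j+m) * Real.cos (j*π/n)^(1:ℕ) *
      (if j = 0 ∨ j = n then 1/(2*(n:ℝ)) else (1/(n:ℝ)) * (Real.cos (j*π/n)^2)⁻¹)
      = (1/(n:ℝ)) * (wt n j *
        (2 * ∑ k ∈ range (m+1), (-1:ℝ)^k * Real.cos (2*k*(j*π/n)) - 1)) := by
    intro j hj
    have hc := cosNeZero m n j hn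
    have hid := secId m ((j:ℝ)*π/n)
    rw [show ((2*m+1:ℕ):ℝ) = (n:ℝ) by rw [hn]] at hid
    rw [cosNPi n j hn0] at hid
    -- hid : (-1)^j = cos θ * ((-1)^m * (2Σ - 1))
    set SS : ℝ := ∑ k ∈ range (m+1), (-1:ℝ)^k * Real.cos (2*k*((j:ℝ)*π/n)) with hSS
    have hsq : ((-1:ℝ))^m * ((-1:ℝ))^m = 1 := by
      rw [← pow_add, ← two_mul, pow_mul]; norm_num
    have hps : ((-1:ℝ))^(j+m) = (-1)^j * (-1)^m := by rw [pow_add]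
    unfold wt
    by_cases hcase : j = 0 ∨ j = n
    · rw [if_pos hcase, if_pos hcase]
      rcases hcase with h0 | h0
      · subst h0
        simp only [Nat.cast_zero, zero_mul, zero_add, zero_div, Real.cos_zero, pow_zero,
          one_mul, pow_one] at hid ⊢
        have h2 : (2*SS - 1) = (-1:ℝ)^m := by
          linear_combination (-((-1:ℝ)^m)) * hid - (2*SS-1) * hsq
        rw [h2]
        ring
      · simp only [h0] at hid ⊢
        have hcn2 : Real.cos ((n:ℝ)*π/n) = -1 := by
          rw [show (n:ℝ)*π/n = π by field_simp]; exact Real.cos_pi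
        rw [hcn2] at hid
        rw [pow_one, hcn2, pow_add]
        have h2 : (2*SS - 1) = -((-1:ℝ)^m * (-1)^n) := by
          linear_combination ((-1:ℝ)^m) * hid - (2*SS-1) * hsq
        rw [h2]
        ring
    · rw [if_neg hcase, if_neg hcase, hps]
      -- middle: (-1)^j (-1)^m cosθ (1/n) (cos² θ)⁻¹ = (1/n)(2Σ-1)
      -- from hid : (-1)^j = cosθ ((-1)^m (2Σ-1))
      have h2 : (2*SS - 1) = (-1:ℝ)^m * (-1)^j / Real.cos ((j:ℝ)*π/n) := by
        field_simp
        linear_combination (-((-1:ℝ)^m)) * hid - ((2*SS-1)*Real.cos ((j:ℝ)*π/n)) * hsq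
      rw [pow_one, h2]
      field_simp
  rw [Finset.sum_congr rfl key, ← Finset.mul_sum]
  have expand : ∀ j ∈ range (n+1), wt n j *
      (2 * ∑ k ∈ range (m+1), (-1:ℝ)^k * Real.cos (2*k*((j:ℝ)*π/n)) - 1)
      = 2 * (∑ k ∈ range (m+1), (-1:ℝ)^k * (wt n j * Real.cos (2*k*((j:ℝ)*π/n)))) - wt n j := by
    intro j _
    have hpull : ∑ k ∈ range (m+1), (-1:ℝ)^k * (wt n j * Real.cos (2*(k:ℝ)*((j:ℝ)*π/n)))
        = wt n j * ∑ k ∈ range (m+1), (-1:ℝ)^k * Real.cos (2*(k:ℝ)*((j:ℝ)*π/n)) := by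
      rw [Finset.mul_sum]
      apply Finset.sum_congr rfl; intro k _; ring
    rw [hpull]
    ring
  rw [Finset.sum_congr rfl expand, Finset.sum_sub_distrib, sumWt n hn0]
  rw [← Finset.mul_sum, Finset.sum_comm]
  have inner : ∀ k ∈ range (m+1), ∑ j ∈ range (n+1), (-1:ℝ)^k * (wt n j * Real.cos (2*k*((j:ℝ)*π/n)))
      = if k = 0 then (n:ℝ) else 0 := by
    intro k hk
    by_cases hk0 : k = 0
    · subst hk0
      have hone : ∀ j ∈ range (n+1),
          (-1:ℝ)^(0:ℕ) * (wt n j * Real.cos (2*((0:ℕ):ℝ)*((j:ℝ)*π/n))) = wt n j := by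
        intro j _; norm_num
      rw [if_pos rfl, Finset.sum_congr rfl hone, sumWt n hn0]
    · rw [if_neg hk0, ← Finset.mul_sum]
      have : ∑ j ∈ range (n+1), wt n j * Real.cos (((2*k:ℕ):ℝ)*j*π/n) = 0 := by
        apply sumW n (2*k) hn0 (by omega) (by simp at hk; omega)
      rw [show (∑ j ∈ range (n+1), wt n j * Real.cos (2*(k:ℝ)*((j:ℝ)*π/n)))
          = ∑ j ∈ range (n+1), wt n j * Real.cos (((2*k:ℕ):ℝ)*j*π/n) by
        apply Finset.sum_congr rfl; intro j _; congr 1; push_cast; ring]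
      rw [this, mul_zero]
  rw [Finset.sum_congr rfl inner]
  rw [Finset.sum_ite_eq' (range (m+1)) 0 (fun _ => (n:ℝ))]
  simp only [Finset.mem_range, Nat.zero_lt_succ, if_pos]
  field_simp
  ring
theorem stmt10 (m n : ℕ) (hn : n = 2 * m + 1)
    (A : Matrix (Fin (n + 1)) (Fin (n + 1)) ℝ)
    (hA : ∀ i j : Fin (n + 1),
      A i j = (-1) ^ ((j : ℕ) + m) * (Real.cos ((j : ℕ) * Real.pi / n)) ^ (i : ℕ))
    (y : Fin (n + 1) → ℝ)
    (hy : ∀ j : Fin (n + 1),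
      y j = if (j : ℕ) = 0 ∨ (j : ℕ) = n then 1 / (2 * (n : ℝ))
        else (1 / (n : ℝ)) * ((Real.cos ((j : ℕ) * Real.pi / n)) ^ 2)⁻¹)
    (e1 : Fin (n + 1) → ℝ)
    (he1 : ∀ i : Fin (n + 1), e1 i = if (i : ℕ) = 1 then 1 else 0) :
    A.mulVec y = e1 ∧ ∀ y' : Fin (n + 1) → ℝ, A.mulVec y' = e1 → y' = y := by
  have hmain : A.mulVec y = e1 := by
    funext i
    have hrow : A.mulVec y i = ∑ j ∈ range (n+1), ((-1:ℝ))^(j+m) * Real.cos (j*π/n)^((i:ℕ)) *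
        (if j = 0 ∨ j = n then 1/(2*(n:ℝ)) else (1/(n:ℝ)) * (Real.cos (j*π/n)^2)⁻¹) := by
      rw [Matrix.mulVec, dotProduct,
        ← Fin.sum_univ_eq_sum_range (fun j => ((-1:ℝ))^(j+m) * Real.cos (j*π/n)^((i:ℕ)) *
          (if j = 0 ∨ j = n then 1/(2*(n:ℝ)) else (1/(n:ℝ)) * (Real.cos (j*π/n)^2)⁻¹)) (n+1)]
      apply Finset.sum_congr rfl
      intro j _
      rw [hA i j, hy j]
    rw [hrow, he1 i]
    have hi : (i:ℕ) = 0 ∨ (i:ℕ) = 1 ∨ ∃ q, (i:ℕ) = q + 2 := by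
      obtain ⟨k, hk⟩ : ∃ k, (i:ℕ) = k := ⟨_, rfl⟩
      match k with
      | 0 => exact Or.inl hk
      | 1 => exact Or.inr (Or.inl hk)
      | (q+2) => exact Or.inr (Or.inr ⟨q, hk⟩)
    rcases hi with h | h | ⟨q, h⟩
    · rw [h, if_neg (by omega), row0 m n hn]
    · rw [h, if_pos rfl, row1 m n hn]
    · rw [h, if_neg (by omega), row2 m n q hn (by have := i.isLt; omega)]
  refine ⟨hmain, ?_⟩
  -- uniqueness
  set v : Fin (n+1) → ℝ := fun j => Real.cos ((j:ℕ)*π/n) with hv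
  have hn' : (0:ℝ) < n := by exact_mod_cast (show 0 < n by omega)
  have hθmem : ∀ j : Fin (n+1), ((j:ℕ):ℝ)*π/n ∈ Set.Icc 0 π := by
    intro j
    have hπ := Real.pi_pos
    refine ⟨by positivity, ?_⟩
    rw [div_le_iff₀ hn']
    have hj : ((j:ℕ):ℝ) ≤ n := by exact_mod_cast Nat.lt_succ_iff.mp j.isLt
    nlinarith
  have hvinj : Function.Injective v := by
    have hlt : ∀ a b : Fin (n+1), a < b → v b < v a := by
      intro a b hab
      apply Real.strictAntiOn_cos (hθmem a) (hθmem b)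
      have hab' : ((a:ℕ):ℝ) < ((b:ℕ):ℝ) := by exact_mod_cast hab
      have hπ := Real.pi_pos
      gcongr
    intro a b hab
    rcases lt_trichotomy a b with h | h | h
    · exact absurd hab (ne_of_gt (hlt a b h))
    · exact h
    · exact absurd hab (ne_of_lt (hlt b a h))
  have hAeq : A = (Matrix.vandermonde v)ᵀ * Matrix.diagonal (fun j : Fin (n+1) => ((-1:ℝ))^((j:ℕ)+m)) := by
    ext i j
    rw [Matrix.mul_diagonal, Matrix.transpose_apply, Matrix.vandermonde_apply, hA i j]
    ring
  have hdet : A.det ≠ 0 := by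
    rw [hAeq, Matrix.det_mul, Matrix.det_transpose, Matrix.det_diagonal]
    apply mul_ne_zero
    · exact Matrix.det_vandermonde_ne_zero_iff.mpr hvinj
    · exact Finset.prod_ne_zero_iff.mpr (fun j _ => by positivity)
  have hU : IsUnit A := (Matrix.isUnit_iff_isUnit_det A).mpr (isUnit_iff_ne_zero.mpr hdet)
  intro y' hy'
  exact Matrix.mulVec_injective_iff_isUnit.mpr hU (hy'.trans hmain.symm)
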